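/- Let p be a prime with p ≡ 3 (mod 4) and let N be a square-free positive integer dividing (p−1)/2. In the quaternion algebra (p,−1/ℚ), the ℤ-submodule O(2p,N) spanned by the four elements 1, I, N·J, and (1+I+J+K)/2 is closed under multiplication and contains 1, hence is a subring; moreover it is a free ℤ-module of rank 4 whose ℚ-span is all of (p,−1/ℚ) (i.e. it is an order of (p,−1/ℚ)). -/

import Mathlib

open Quaternion

set_option maxHeartbeats 1000000

/-- Let `p` be a prime with `p ≡ 3 (mod 4)` and `N` a square-free positive
integer dividing `(p−1)/2`. The `ℤ`-submodule of the quaternion algebra `(p,−1/ℚ)` spanned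
by `1`, `I`, `N·J` and `(1+I+J+K)/2` contains `1`, is closed under multiplication, and is a
free `ℤ`-module of rank `4` whose `ℚ`-span is the whole algebra (i.e. it is an order of
`(p,−1/ℚ)`). -/
theorem eichler_order_discriminant_two_p (p : ℕ) (hp : p.Prime) (hp4 : p % 4 = 3)
    (N : ℕ) (hN : 0 < N) (hsf : Squarefree N) (hdvd : N ∣ (p - 1) / 2) :
    ∀ M : Submodule ℤ ℍ[ℚ, (p : ℚ), -1],
      M = Submodule.span ℤ
        ({1, ⟨0, 1, 0, 0⟩, ⟨0, 0, (N : ℚ), 0⟩, ⟨1/2, 1/2, 1/2, 1/2⟩} :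
          Set ℍ[ℚ, (p : ℚ), -1]) →
      (1 : ℍ[ℚ, (p : ℚ), -1]) ∈ M ∧
      (∀ x ∈ M, ∀ y ∈ M, x * y ∈ M) ∧
      Module.Free ℤ M ∧ Module.finrank ℤ M = 4 ∧
      Submodule.span ℚ (M : Set ℍ[ℚ, (p : ℚ), -1]) = ⊤ := by
  intro M hM
  obtain ⟨m, hm⟩ : ∃ m, p = 4*m+3 := ⟨p/4, by omega⟩
  obtain ⟨c, hc⟩ : ∃ c, (p-1)/2 = N*c := hdvd
  have hc' : N*c = 2*m+1 := by omega
  have hpQ : (p:ℚ) = 4*m+3 := by exact_mod_cast congrArg (Nat.cast : ℕ → ℚ) hm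
  have hNc : (N:ℚ)*c = 2*m+1 := by exact_mod_cast congrArg (Nat.cast : ℕ → ℚ) hc'
  set e1 : ℍ[ℚ,(p:ℚ),-1] := 1 with he1
  set e2 : ℍ[ℚ,(p:ℚ),-1] := ⟨0,1,0,0⟩ with he2
  set e3 : ℍ[ℚ,(p:ℚ),-1] := ⟨0,0,(N:ℚ),0⟩ with he3
  set e4 : ℍ[ℚ,(p:ℚ),-1] := ⟨1/2,1/2,1/2,1/2⟩ with he4
  set S : Set ℍ[ℚ,(p:ℚ),-1] := {e1, e2, e3, e4} with hS
  subst hM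
  have h1 : e1 ∈ Submodule.span ℤ S := Submodule.subset_span (by simp [hS])
  have h2 : e2 ∈ Submodule.span ℤ S := Submodule.subset_span (by simp [hS])
  have h3 : e3 ∈ Submodule.span ℤ S := Submodule.subset_span (by simp [hS])
  have h4 : e4 ∈ Submodule.span ℤ S := Submodule.subset_span (by simp [hS])
  have hcomb : ∀ a b c d : ℤ,
      a • e1 + b • e2 + c • e3 + d • e4 ∈ Submodule.span ℤ S := fun a b c d =>
    add_mem (add_mem (add_mem (Submodule.smul_mem _ a h1) (Submodule.smul_mem _ b h2))
      (Submodule.smul_mem _ c h3)) (Submodule.smul_mem _ d h4)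
  -- products of generators
  have p22 : e2 * e2 = (p : ℤ) • e1 + (0:ℤ) • e2 + (0:ℤ) • e3 + (0:ℤ) • e4 := by
    ext <;>
      simp only [he1, he2, he3, he4, QuaternionAlgebra.re_mul, QuaternionAlgebra.imI_mul,
        QuaternionAlgebra.imJ_mul, QuaternionAlgebra.imK_mul, QuaternionAlgebra.re_add,
        QuaternionAlgebra.imI_add, QuaternionAlgebra.imJ_add, QuaternionAlgebra.imK_add,
        QuaternionAlgebra.re_smul, QuaternionAlgebra.imI_smul, QuaternionAlgebra.imJ_smul,
        QuaternionAlgebra.imK_smul, QuaternionAlgebra.re_one, QuaternionAlgebra.imI_one,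
        QuaternionAlgebra.imJ_one, QuaternionAlgebra.imK_one] <;>
      simp only [zsmul_eq_mul, Int.cast_add, Int.cast_mul, Int.cast_one, Int.cast_neg,
        Int.cast_ofNat, Int.cast_natCast, hpQ] <;>
      linarith [hNc]
  have p23 : e2 * e3 = (-N : ℤ) • e1 + (-N : ℤ) • e2 + (-1:ℤ) • e3 + (2*N : ℤ) • e4 := by
    ext <;>
      simp only [he1, he2, he3, he4, QuaternionAlgebra.re_mul, QuaternionAlgebra.imI_mul,
        QuaternionAlgebra.imJ_mul, QuaternionAlgebra.imK_mul, QuaternionAlgebra.re_add,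
        QuaternionAlgebra.imI_add, QuaternionAlgebra.imJ_add, QuaternionAlgebra.imK_add,
        QuaternionAlgebra.re_smul, QuaternionAlgebra.imI_smul, QuaternionAlgebra.imJ_smul,
        QuaternionAlgebra.imK_smul, QuaternionAlgebra.re_one, QuaternionAlgebra.imI_one,
        QuaternionAlgebra.imJ_one, QuaternionAlgebra.imK_one] <;>
      simp only [zsmul_eq_mul, Int.cast_add, Int.cast_mul, Int.cast_one, Int.cast_neg,
        Int.cast_ofNat, Int.cast_natCast, hpQ] <;>
      linarith [hNc]
  have p32 : e3 * e2 = (N : ℤ) • e1 + (N : ℤ) • e2 + (1:ℤ) • e3 + (-(2*N) : ℤ) • e4 := by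
    ext <;>
      simp only [he1, he2, he3, he4, QuaternionAlgebra.re_mul, QuaternionAlgebra.imI_mul,
        QuaternionAlgebra.imJ_mul, QuaternionAlgebra.imK_mul, QuaternionAlgebra.re_add,
        QuaternionAlgebra.imI_add, QuaternionAlgebra.imJ_add, QuaternionAlgebra.imK_add,
        QuaternionAlgebra.re_smul, QuaternionAlgebra.imI_smul, QuaternionAlgebra.imJ_smul,
        QuaternionAlgebra.imK_smul, QuaternionAlgebra.re_one, QuaternionAlgebra.imI_one,
        QuaternionAlgebra.imJ_one, QuaternionAlgebra.imK_one] <;>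
      simp only [zsmul_eq_mul, Int.cast_add, Int.cast_mul, Int.cast_one, Int.cast_neg,
        Int.cast_ofNat, Int.cast_natCast, hpQ] <;>
      linarith [hNc]
  have p33 : e3 * e3 = (-(N*N) : ℤ) • e1 + (0:ℤ) • e2 + (0:ℤ) • e3 + (0:ℤ) • e4 := by
    ext <;>
      simp only [he1, he2, he3, he4, QuaternionAlgebra.re_mul, QuaternionAlgebra.imI_mul,
        QuaternionAlgebra.imJ_mul, QuaternionAlgebra.imK_mul, QuaternionAlgebra.re_add,
        QuaternionAlgebra.imI_add, QuaternionAlgebra.imJ_add, QuaternionAlgebra.imK_add,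
        QuaternionAlgebra.re_smul, QuaternionAlgebra.imI_smul, QuaternionAlgebra.imJ_smul,
        QuaternionAlgebra.imK_smul, QuaternionAlgebra.re_one, QuaternionAlgebra.imI_one,
        QuaternionAlgebra.imJ_one, QuaternionAlgebra.imK_one] <;>
      simp only [zsmul_eq_mul, Int.cast_add, Int.cast_mul, Int.cast_one, Int.cast_neg,
        Int.cast_ofNat, Int.cast_natCast, hpQ] <;>
      linarith [hNc]
  have p24 : e2 * e4 = ((2*m+1 : ℤ)) • e1 + (0:ℤ) • e2 + (c:ℤ) • e3 + (1:ℤ) • e4 := by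
    ext <;>
      simp only [he1, he2, he3, he4, QuaternionAlgebra.re_mul, QuaternionAlgebra.imI_mul,
        QuaternionAlgebra.imJ_mul, QuaternionAlgebra.imK_mul, QuaternionAlgebra.re_add,
        QuaternionAlgebra.imI_add, QuaternionAlgebra.imJ_add, QuaternionAlgebra.imK_add,
        QuaternionAlgebra.re_smul, QuaternionAlgebra.imI_smul, QuaternionAlgebra.imJ_smul,
        QuaternionAlgebra.imK_smul, QuaternionAlgebra.re_one, QuaternionAlgebra.imI_one,
        QuaternionAlgebra.imJ_one, QuaternionAlgebra.imK_one] <;>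
      simp only [zsmul_eq_mul, Int.cast_add, Int.cast_mul, Int.cast_one, Int.cast_neg,
        Int.cast_ofNat, Int.cast_natCast, hpQ] <;>
      linarith [hNc]
  have p42 : e4 * e2 = ((2*m+2 : ℤ)) • e1 + (1:ℤ) • e2 + (-c:ℤ) • e3 + (-1:ℤ) • e4 := by
    ext <;>
      simp only [he1, he2, he3, he4, QuaternionAlgebra.re_mul, QuaternionAlgebra.imI_mul,
        QuaternionAlgebra.imJ_mul, QuaternionAlgebra.imK_mul, QuaternionAlgebra.re_add,
        QuaternionAlgebra.imI_add, QuaternionAlgebra.imJ_add, QuaternionAlgebra.imK_add,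
        QuaternionAlgebra.re_smul, QuaternionAlgebra.imI_smul, QuaternionAlgebra.imJ_smul,
        QuaternionAlgebra.imK_smul, QuaternionAlgebra.re_one, QuaternionAlgebra.imI_one,
        QuaternionAlgebra.imJ_one, QuaternionAlgebra.imK_one] <;>
      simp only [zsmul_eq_mul, Int.cast_add, Int.cast_mul, Int.cast_one, Int.cast_neg,
        Int.cast_ofNat, Int.cast_natCast, hpQ] <;>
      linarith [hNc]
  have p34 : e3 * e4 = (0:ℤ) • e1 + (N:ℤ) • e2 + (1:ℤ) • e3 + (-N:ℤ) • e4 := by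
    ext <;>
      simp only [he1, he2, he3, he4, QuaternionAlgebra.re_mul, QuaternionAlgebra.imI_mul,
        QuaternionAlgebra.imJ_mul, QuaternionAlgebra.imK_mul, QuaternionAlgebra.re_add,
        QuaternionAlgebra.imI_add, QuaternionAlgebra.imJ_add, QuaternionAlgebra.imK_add,
        QuaternionAlgebra.re_smul, QuaternionAlgebra.imI_smul, QuaternionAlgebra.imJ_smul,
        QuaternionAlgebra.imK_smul, QuaternionAlgebra.re_one, QuaternionAlgebra.imI_one,
        QuaternionAlgebra.imJ_one, QuaternionAlgebra.imK_one] <;>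
      simp only [zsmul_eq_mul, Int.cast_add, Int.cast_mul, Int.cast_one, Int.cast_neg,
        Int.cast_ofNat, Int.cast_natCast, hpQ] <;>
      linarith [hNc]
  have p43 : e4 * e3 = (-N:ℤ) • e1 + (-N:ℤ) • e2 + (0:ℤ) • e3 + (N:ℤ) • e4 := by
    ext <;>
      simp only [he1, he2, he3, he4, QuaternionAlgebra.re_mul, QuaternionAlgebra.imI_mul,
        QuaternionAlgebra.imJ_mul, QuaternionAlgebra.imK_mul, QuaternionAlgebra.re_add,
        QuaternionAlgebra.imI_add, QuaternionAlgebra.imJ_add, QuaternionAlgebra.imK_add,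
        QuaternionAlgebra.re_smul, QuaternionAlgebra.imI_smul, QuaternionAlgebra.imJ_smul,
        QuaternionAlgebra.imK_smul, QuaternionAlgebra.re_one, QuaternionAlgebra.imI_one,
        QuaternionAlgebra.imJ_one, QuaternionAlgebra.imK_one] <;>
      simp only [zsmul_eq_mul, Int.cast_add, Int.cast_mul, Int.cast_one, Int.cast_neg,
        Int.cast_ofNat, Int.cast_natCast, hpQ] <;>
      linarith [hNc]
  have p44 : e4 * e4 = ((2*m+1:ℤ)) • e1 + (0:ℤ) • e2 + (0:ℤ) • e3 + (1:ℤ) • e4 := by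
    ext <;>
      simp only [he1, he2, he3, he4, QuaternionAlgebra.re_mul, QuaternionAlgebra.imI_mul,
        QuaternionAlgebra.imJ_mul, QuaternionAlgebra.imK_mul, QuaternionAlgebra.re_add,
        QuaternionAlgebra.imI_add, QuaternionAlgebra.imJ_add, QuaternionAlgebra.imK_add,
        QuaternionAlgebra.re_smul, QuaternionAlgebra.imI_smul, QuaternionAlgebra.imJ_smul,
        QuaternionAlgebra.imK_smul, QuaternionAlgebra.re_one, QuaternionAlgebra.imI_one,
        QuaternionAlgebra.imJ_one, QuaternionAlgebra.imK_one] <;>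
      simp only [zsmul_eq_mul, Int.cast_add, Int.cast_mul, Int.cast_one, Int.cast_neg,
        Int.cast_ofNat, Int.cast_natCast, hpQ] <;>
      linarith [hNc]
  have hgen : ∀ x ∈ S, ∀ y ∈ S, x * y ∈ Submodule.span ℤ S := by
    intro x hx y hy
    rcases hx with rfl | rfl | rfl | rfl <;> rcases hy with rfl | rfl | rfl | rfl
    · rw [show e1*e1 = e1 from one_mul e1]; exact h1
    · rw [one_mul]; exact h2
    · rw [one_mul]; exact h3
    · rw [one_mul]; exact h4
    · rw [mul_one]; exact h2
    · rw [p22]; exact hcomb _ _ _ _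
    · rw [p23]; exact hcomb _ _ _ _
    · rw [p24]; exact hcomb _ _ _ _
    · rw [mul_one]; exact h3
    · rw [p32]; exact hcomb _ _ _ _
    · rw [p33]; exact hcomb _ _ _ _
    · rw [p34]; exact hcomb _ _ _ _
    · rw [mul_one]; exact h4
    · rw [p42]; exact hcomb _ _ _ _
    · rw [p43]; exact hcomb _ _ _ _
    · rw [p44]; exact hcomb _ _ _ _
  have hmul : ∀ x ∈ Submodule.span ℤ S, ∀ y ∈ Submodule.span ℤ S,
      x * y ∈ Submodule.span ℤ S := by
    have step : ∀ a ∈ S, ∀ y ∈ Submodule.span ℤ S, a * y ∈ Submodule.span ℤ S := by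
      intro a ha y hy
      induction hy using Submodule.span_induction with
      | mem z hz => exact hgen a ha z hz
      | zero => simp
      | add u v _ _ hu hv => rw [mul_add]; exact add_mem hu hv
      | smul t u _ hu => rw [mul_smul_comm]; exact Submodule.smul_mem _ t hu
    intro x hx y hy
    induction hx using Submodule.span_induction with
    | mem z hz => exact step z hz y hy
    | zero => simp
    | add u v _ _ hu hv => rw [add_mul]; exact add_mem hu hv
    | smul t u _ hu => rw [smul_mul_assoc]; exact Submodule.smul_mem _ t hu
  -- linear independence and basis
  set b : Fin 4 → ℍ[ℚ,(p:ℚ),-1] := ![e1, e2, e3, e4] with hb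
  have hrange : Set.range b = S := by
    ext x
    simp only [hS, Set.mem_insert_iff, Set.mem_singleton_iff, Set.mem_range]
    constructor
    · rintro ⟨i, rfl⟩; fin_cases i <;> simp [hb]
    · rintro (rfl | rfl | rfl | rfl)
      exacts [⟨0, rfl⟩, ⟨1, rfl⟩, ⟨2, rfl⟩, ⟨3, rfl⟩]
  have hNQ : (N:ℚ) ≠ 0 := Nat.cast_ne_zero.mpr hN.ne'
  have hli : LinearIndependent ℤ b := by
    rw [Fintype.linearIndependent_iff]
    intro g hg
    have hg' := hg
    rw [Fin.sum_univ_four] at hg'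
    have hre := congrArg QuaternionAlgebra.re hg'
    have hi := congrArg QuaternionAlgebra.imI hg'
    have hj := congrArg QuaternionAlgebra.imJ hg'
    have hk := congrArg QuaternionAlgebra.imK hg'
    simp only [hb, he1, he2, he3, he4, Matrix.cons_val_zero, Matrix.cons_val_one,
      Matrix.head_cons, Matrix.cons_val_two, Matrix.tail_cons, Matrix.cons_val_three,
      QuaternionAlgebra.re_add, QuaternionAlgebra.imI_add, QuaternionAlgebra.imJ_add,
      QuaternionAlgebra.imK_add, QuaternionAlgebra.re_smul, QuaternionAlgebra.imI_smul,
      QuaternionAlgebra.imJ_smul, QuaternionAlgebra.imK_smul, QuaternionAlgebra.re_one,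
      QuaternionAlgebra.imI_one, QuaternionAlgebra.imJ_one, QuaternionAlgebra.imK_one,
      QuaternionAlgebra.re_zero, QuaternionAlgebra.imI_zero, QuaternionAlgebra.imJ_zero,
      QuaternionAlgebra.imK_zero] at hre hi hj hk
    simp only [zsmul_eq_mul, smul_eq_mul, mul_zero, mul_one, add_zero, zero_add]
      at hre hi hj hk
    have h3' : (g 3 : ℚ) = 0 := by linarith
    have h0' : (g 0 : ℚ) = 0 := by linarith
    have h1' : (g 1 : ℚ) = 0 := by linarith
    have h2' : (g 2 : ℚ) = 0 := by
      have : (g 2 : ℚ) * N = 0 := by linarith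
      exact (mul_eq_zero.mp this).resolve_right hNQ
    intro i
    fin_cases i
    exacts [by exact_mod_cast h0', by exact_mod_cast h1', by exact_mod_cast h2',
      by exact_mod_cast h3']
  have hbasis : Module.Basis (Fin 4) ℤ (Submodule.span ℤ S) := by
    rw [← hrange]; exact Module.Basis.span hli
  refine ⟨h1, hmul, Module.Free.of_basis hbasis, ?_, ?_⟩
  · rw [Module.finrank_eq_card_basis hbasis, Fintype.card_fin]
  · rw [eq_top_iff]
    rintro x -
    have hmem : ∀ z ∈ Submodule.span ℤ S,
        z ∈ Submodule.span ℚ ((Submodule.span ℤ S : Submodule ℤ _) : Set ℍ[ℚ,(p:ℚ),-1]) :=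
      fun z hz => Submodule.subset_span hz
    have m1 := hmem e1 h1
    have m2 := hmem e2 h2
    have m3 := hmem e3 h3
    have m4 := hmem e4 h4
    have mJ : (⟨0,0,1,0⟩ : ℍ[ℚ,(p:ℚ),-1]) ∈
        Submodule.span ℚ ((Submodule.span ℤ S : Submodule ℤ _) : Set ℍ[ℚ,(p:ℚ),-1]) := by
      have : (⟨0,0,1,0⟩ : ℍ[ℚ,(p:ℚ),-1]) = (N:ℚ)⁻¹ • e3 := by
        ext <;> simp [he3, hNQ]
      rw [this]; exact Submodule.smul_mem _ _ m3
    have mK : (⟨0,0,0,1⟩ : ℍ[ℚ,(p:ℚ),-1]) ∈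
        Submodule.span ℚ ((Submodule.span ℤ S : Submodule ℤ _) : Set ℍ[ℚ,(p:ℚ),-1]) := by
      have : (⟨0,0,0,1⟩ : ℍ[ℚ,(p:ℚ),-1]) =
          (2:ℚ) • e4 - e1 - e2 - (⟨0,0,1,0⟩ : ℍ[ℚ,(p:ℚ),-1]) := by
        ext <;> simp [he1, he2, he4] <;> norm_num
      rw [this]
      exact sub_mem (sub_mem (sub_mem (Submodule.smul_mem _ _ m4) m1) m2) mJ
    have hx : x = x.re • e1 + x.imI • e2 + x.imJ • (⟨0,0,1,0⟩ : ℍ[ℚ,(p:ℚ),-1])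
        + x.imK • (⟨0,0,0,1⟩ : ℍ[ℚ,(p:ℚ),-1]) := by
      ext <;> simp [he1, he2]
    rw [hx]
    exact add_mem (add_mem (add_mem (Submodule.smul_mem _ _ m1) (Submodule.smul_mem _ _ m2))
      (Submodule.smul_mem _ _ mJ)) (Submodule.smul_mem _ _ mK)
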